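/- In the extremal setup, the maximum degree of G* equals n − k + 1, attained at the vertex v_k, and consequently λ₁(G*) < n − k + 1. -/

import Mathlib

open Classical Matrix

/-- The adjacency matrix of a simple graph on `Fin n`, with real entries. -/
noncomputable def adjMat {n : ℕ} (G : SimpleGraph (Fin n)) : Matrix (Fin n) (Fin n) ℝ :=
  Matrix.of fun u v => if G.Adj u v then (1 : ℝ) else 0

/-- `x` is a principal (Perron) eigenvector of the connected graph `G` with eigenvalue `lam`:
it is a positive eigenvector of the adjacency matrix.  By Perron–Frobenius, for a connected
graph this forces `lam = λ₁(G)`. -/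
def IsPrincipalEigenpair {n : ℕ} (G : SimpleGraph (Fin n)) (lam : ℝ) (x : Fin n → ℝ) : Prop :=
  (∀ v, 0 < x v) ∧ adjMat G *ᵥ x = lam • x

/-- The ratio of the maximum to the minimum entry of a vector. -/
noncomputable def pRatio {n : ℕ} (x : Fin n → ℝ) : ℝ := (⨆ v, x v) / (⨅ v, x v)

/-- Degree of a vertex. -/
noncomputable def deg {n : ℕ} (G : SimpleGraph (Fin n)) (v : Fin n) : ℕ :=
  (G.neighborSet v).ncard

/-- The kite (lollipop) graph on `Fin n`: a path on the vertices `0, 1, …, r-1`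
followed by a clique on the vertices `r-1, r, …, n-1`, i.e. `P_r · K_{n-r+1}`. -/
def kiteGraph (n r : ℕ) : SimpleGraph (Fin n) where
  Adj u v := u ≠ v ∧
    ((u.val < r ∧ v.val < r ∧ (u.val + 1 = v.val ∨ v.val + 1 = u.val)) ∨
      (r ≤ u.val + 1 ∧ r ≤ v.val + 1))
  symm := by
    constructor
    rintro u v ⟨h1, h2⟩
    exact ⟨h1.symm, by tauto⟩
  loopless := by
    constructor
    rintro u ⟨h1, -⟩
    exact h1 rfl

/-! ### Chebyshev-like polynomials -/

noncomputable def cheb (t : ℝ) : ℕ → ℝ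
  | 0 => 1
  | 1 => t
  | (n+2) => t * cheb t (n+1) - cheb t n

lemma cheb_zero (t : ℝ) : cheb t 0 = 1 := rfl
lemma cheb_one (t : ℝ) : cheb t 1 = t := rfl
lemma cheb_succ (t : ℝ) (n : ℕ) : cheb t (n+2) = t * cheb t (n+1) - cheb t n := rfl

lemma cheb_one_le_and_mono {t : ℝ} (ht : 2 ≤ t) : ∀ i, 1 ≤ cheb t i ∧ cheb t i ≤ cheb t (i+1) := by
  intro i
  induction i with
  | zero => simp [cheb_zero, cheb_one]; linarith
  | succ j ih =>
      obtain ⟨h1, h2⟩ := ih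
      have h3 : 1 ≤ cheb t (j+1) := le_trans h1 h2
      refine ⟨h3, ?_⟩
      rw [cheb_succ]
      nlinarith

lemma cheb_pos {t : ℝ} (ht : 2 ≤ t) (i : ℕ) : 0 < cheb t i :=
  lt_of_lt_of_le one_pos (cheb_one_le_and_mono ht i).1

lemma cheb_mono_index {t : ℝ} (ht : 2 ≤ t) (i : ℕ) : cheb t i ≤ cheb t (i+1) :=
  (cheb_one_le_and_mono ht i).2

lemma cheb_ge_pow {t : ℝ} (ht : 2 ≤ t) : ∀ i, (t-1)^i ≤ cheb t i := by
  intro i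
  induction i with
  | zero => simp [cheb_zero]
  | succ j ih =>
      rcases Nat.eq_zero_or_pos j with rfl | hj
      · simp [cheb_one]
      · obtain ⟨j', rfl⟩ := Nat.exists_eq_succ_of_ne_zero hj.ne'
        rw [cheb_succ]
        have h1 := cheb_mono_index ht j'
        have h2 := cheb_pos ht (j'+1)
        have h3 : (t-1) * (t-1)^(j'+1) ≤ (t-1) * cheb t (j'+1) :=
          mul_le_mul_of_nonneg_left ih (by linarith)
        calc (t-1)^(j'+2) = (t-1) * (t-1)^(j'+1) := by ring
        _ ≤ (t-1) * cheb t (j'+1) := h3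
        _ = t * cheb t (j'+1) - cheb t (j'+1) := by ring
        _ ≤ t * cheb t (j'+1) - cheb t j' := by linarith

lemma cheb_strict_aux {s t : ℝ} (hs : 2 ≤ s) (hst : s < t) :
    ∀ i, cheb s i ≤ cheb t i ∧ cheb s (i+1) * cheb t i < cheb t (i+1) * cheb s i := by
  have ht : 2 ≤ t := by linarith
  intro i
  induction i with
  | zero => simp [cheb_zero, cheb_one, hst]
  | succ j ih =>
      obtain ⟨h1, h2⟩ := ih
      have hsj1 := cheb_pos hs (j+1)
      have htj1 := cheb_pos ht (j+1)
      have hsj := cheb_pos hs j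
      have htj := cheb_pos ht j
      have key : cheb s (j+1) ≤ cheb t (j+1) := by
        have : cheb s (j+1) * cheb t j ≤ cheb t (j+1) * cheb t j := by
          calc cheb s (j+1) * cheb t j ≤ cheb t (j+1) * cheb s j := le_of_lt h2
          _ ≤ cheb t (j+1) * cheb t j := by
              apply mul_le_mul_of_nonneg_left h1 (le_of_lt htj1)
        exact le_of_mul_le_mul_right this htj
      refine ⟨key, ?_⟩
      rw [cheb_succ, cheb_succ]
      nlinarith [mul_pos htj1 hsj1]

lemma cheb_lt_cheb {s t : ℝ} (hs : 2 ≤ s) (hst : s < t) (i : ℕ) :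
    cheb s (i+1) < cheb t (i+1) := by
  have ht : 2 ≤ t := by linarith
  obtain ⟨h1, h2⟩ := cheb_strict_aux hs hst i
  have htj := cheb_pos ht i
  have : cheb s (i+1) * cheb t i < cheb t (i+1) * cheb t i := by
    calc cheb s (i+1) * cheb t i < cheb t (i+1) * cheb s i := h2
    _ ≤ cheb t (i+1) * cheb t i :=
        mul_le_mul_of_nonneg_left h1 (le_of_lt (cheb_pos ht (i+1)))
  exact lt_of_mul_lt_mul_right this (le_of_lt htj)

lemma cheb_continuous (i : ℕ) : Continuous (fun t : ℝ => cheb t i) := by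
  induction i using Nat.strong_induction_on with
  | _ i ih =>
    match i with
    | 0 => simpa [cheb_zero] using continuous_const
    | 1 => simpa [cheb_one] using continuous_id'
    | (j+2) =>
        have h1 := ih (j+1) (by omega)
        have h2 := ih j (by omega)
        simp only [cheb_succ]
        exact ((continuous_id.mul h1).sub h2)

/-! ### The kite graph: explicit positive eigenpair -/

lemma kite_adj {n r : ℕ} (u w : Fin n) : (kiteGraph n r).Adj u w ↔ (u ≠ w ∧
    ((u.val < r ∧ w.val < r ∧ (u.val + 1 = w.val ∨ w.val + 1 = u.val)) ∨
      (r ≤ u.val + 1 ∧ r ≤ w.val + 1))) := Iff.rfl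

lemma kite_connected {n r : ℕ} (hn : 0 < n) : (kiteGraph n r).Connected := by
  have hreach : ∀ j (hj : j < n), (kiteGraph n r).Reachable ⟨0, hn⟩ ⟨j, hj⟩ := by
    intro j
    induction j with
    | zero => intro hj; rfl
    | succ i ih =>
        intro hj
        have hi : i < n := by omega
        have hadj : (kiteGraph n r).Adj ⟨i, hi⟩ ⟨i+1, hj⟩ := by
          rw [kite_adj]
          refine ⟨by simp [Fin.ext_iff], ?_⟩
          rcases lt_or_ge (i+1) r with h | h
          · exact Or.inl ⟨(by omega : i < r), (by omega : i + 1 < r), Or.inl rfl⟩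
          · exact Or.inr ⟨(by omega : r ≤ i + 1), (by omega : r ≤ i + 1 + 1)⟩
        exact (ih hi).trans hadj.reachable
  rw [SimpleGraph.connected_iff]
  refine ⟨?_, ⟨⟨0, hn⟩⟩⟩
  intro u v
  have h1 := hreach u.val u.isLt
  have h2 := hreach v.val v.isLt
  simp only [Fin.eta] at h1 h2
  exact h1.symm.trans h2

lemma kite_pair (n a : ℕ) (hrn : a + 4 ≤ n) :
    ∃ (t : ℝ) (y : Fin n → ℝ), ((n - (a+2) : ℕ) : ℝ) < t ∧
      IsPrincipalEigenpair (kiteGraph n (a+2)) t y ∧ cheb t (a+1) ≤ pRatio y := by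
  have hm2 : 2 ≤ n - (a+2) := by omega
  have hμ : ((n - (a+2) : ℕ) : ℝ) = (n : ℝ) - a - 2 := by
    rw [Nat.cast_sub (by omega : a + 2 ≤ n)]
    push_cast
    ring
  set μ : ℝ := ((n - (a+2) : ℕ) : ℝ) with hμdef
  have hμ2 : (2:ℝ) ≤ μ := by rw [hμdef]; exact_mod_cast hm2
  have hN : (4:ℝ) + a ≤ (n:ℝ) := by exact_mod_cast (by omega : 4 + a ≤ n)
  have ha0 : (0:ℝ) ≤ (a:ℝ) := Nat.cast_nonneg a
  set F : ℝ → ℝ := fun t => cheb t (a+2) * (t + 1 - μ) - μ * cheb t (a+1) with hFdef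
  have hFcont : Continuous F := by
    apply Continuous.sub
    · exact (cheb_continuous (a+2)).mul (by continuity)
    · exact continuous_const.mul (cheb_continuous (a+1))
  have hFμ : F μ < 0 := by
    have h := cheb_pos hμ2 a
    simp only [hFdef, cheb_succ]
    nlinarith
  have hn2 : (2:ℝ) ≤ (n:ℝ) := by linarith
  have hFn : 0 < F (n:ℝ) := by
    have h1 := cheb_pos hn2 (a+1)
    have h2 := cheb_mono_index hn2 a
    have h3 := cheb_pos hn2 a
    simp only [hFdef, cheb_succ]
    rw [hμ]
    have e2 : (0:ℝ) < ((n:ℝ)-1)*((a:ℝ)+3) - ((n:ℝ)-(a:ℝ)-2) := by nlinarith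
    have e1 : cheb ↑n a * ((a:ℝ)+3) ≤ cheb ↑n (a+1) * ((a:ℝ)+3) :=
      mul_le_mul_of_nonneg_right h2 (by linarith)
    nlinarith [e1, mul_pos h1 e2]
  obtain ⟨t, htIoo, htF⟩ : ∃ t ∈ Set.Ioo μ (n:ℝ), F t = 0 := by
    have hsub := intermediate_value_Ioo (by linarith : μ ≤ (n:ℝ)) hFcont.continuousOn
    have : (0:ℝ) ∈ Set.Ioo (F μ) (F (n:ℝ)) := ⟨hFμ, hFn⟩
    obtain ⟨t, ht, htF⟩ := hsub this
    exact ⟨t, ht, htF⟩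
  have hμt : μ < t := htIoo.1
  have ht2 : (2:ℝ) ≤ t := by linarith
  have hden : (0:ℝ) < t + 1 - μ := by linarith
  set c : ℝ := cheb t (a+1) / (t + 1 - μ) with hcdef
  have hcpos : 0 < c := div_pos (cheb_pos ht2 (a+1)) hden
  set y : Fin n → ℝ := fun u => if u.val < a + 2 then cheb t u.val else c with hydef
  have hypos : ∀ u, 0 < y u := by
    intro u
    rw [hydef]
    dsimp only
    split
    · exact cheb_pos ht2 _
    · exact hcpos
  set T : Finset (Fin n) := Finset.univ.filter (fun w : Fin n => a + 2 ≤ w.val) with hTdef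
  have hTcard : T.card = n - (a+2) := by
    rw [hTdef, Finset.card_filter]
    rw [Fin.sum_univ_eq_sum_range (fun j => if a + 2 ≤ j then 1 else 0) n]
    rw [← Finset.card_filter]
    have : (Finset.range n).filter (fun j => a + 2 ≤ j) = Finset.Ico (a+2) n := by
      ext j; simp [Finset.mem_Ico]; omega
    rw [this, Nat.card_Ico]
  have hTsum : ∑ w ∈ T, y w = μ * c := by
    have hconst : ∀ w ∈ T, y w = c := by
      intro w hw
      rw [hTdef, Finset.mem_filter] at hw
      rw [hydef]
      exact if_neg (by omega)
    rw [Finset.sum_congr rfl hconst, Finset.sum_const, hTcard, nsmul_eq_mul, ← hμdef]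
  have hmuc : μ * c = cheb t (a+2) := by
    simp only [hFdef] at htF
    rw [hcdef]
    field_simp
    linear_combination -htF
  have heig : adjMat (kiteGraph n (a+2)) *ᵥ y = t • y := by
    funext u
    rw [Matrix.mulVec, Pi.smul_apply, smul_eq_mul]
    have hsum : (fun v => adjMat (kiteGraph n (a+2)) u v) ⬝ᵥ y
        = ∑ w ∈ Finset.univ.filter (fun w => (kiteGraph n (a+2)).Adj u w), y w := by
      rw [Finset.sum_filter, dotProduct]
      apply Finset.sum_congr rfl
      intro w _
      simp only [adjMat, Matrix.of_apply]
      split <;> simp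
    rw [hsum]
    obtain ⟨i, hi⟩ := u
    rcases Nat.lt_or_ge i (a+2) with hcase | hcase
    · rcases Nat.eq_zero_or_pos i with rfl | hipos
      · have hfil : Finset.univ.filter (fun w => (kiteGraph n (a+2)).Adj ⟨0, hi⟩ w)
            = {(⟨1, by omega⟩ : Fin n)} := by
          ext w
          simp only [Finset.mem_filter, Finset.mem_univ, true_and, Finset.mem_singleton,
            kite_adj, ne_eq, Fin.ext_iff]
          show (¬(0 = w.val) ∧ ((0 < a+2 ∧ w.val < a+2 ∧ (0+1 = w.val ∨ w.val+1 = 0)) ∨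
            (a+2 ≤ 0+1 ∧ a+2 ≤ w.val+1))) ↔ w.val = 1
          omega
        rw [hfil, Finset.sum_singleton]
        show (if (1:ℕ) < a + 2 then cheb t 1 else c) = t * (if (0:ℕ) < a + 2 then cheb t 0 else c)
        rw [if_pos (by omega), if_pos (by omega), cheb_zero, cheb_one]
        ring
      · rcases Nat.lt_or_ge (i+1) (a+2) with hmid | hend
        · obtain ⟨b, rfl⟩ : ∃ b, i = b + 1 := ⟨i - 1, by omega⟩
          have hfil : Finset.univ.filter (fun w => (kiteGraph n (a+2)).Adj ⟨b+1, hi⟩ w)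
              = {(⟨b, by omega⟩ : Fin n), (⟨b+2, by omega⟩ : Fin n)} := by
            ext w
            simp only [Finset.mem_filter, Finset.mem_univ, true_and, Finset.mem_insert,
              Finset.mem_singleton, kite_adj, ne_eq, Fin.ext_iff]
            show (¬(b+1 = w.val) ∧ ((b+1 < a+2 ∧ w.val < a+2 ∧ (b+1+1 = w.val ∨ w.val+1 = b+1)) ∨
              (a+2 ≤ b+1+1 ∧ a+2 ≤ w.val+1))) ↔ (w.val = b ∨ w.val = b + 2)
            omega
          rw [hfil, Finset.sum_pair (by simp [Fin.ext_iff] <;> omega)]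
          show (if b < a + 2 then cheb t b else c) + (if b+2 < a + 2 then cheb t (b+2) else c)
              = t * (if b+1 < a + 2 then cheb t (b+1) else c)
          rw [if_pos (by omega), if_pos (by omega), if_pos (by omega), cheb_succ]
          ring
        · have hieq : i = a + 1 := by omega
          subst hieq
          have hfil : Finset.univ.filter (fun w => (kiteGraph n (a+2)).Adj ⟨a+1, hi⟩ w)
              = insert (⟨a, by omega⟩ : Fin n) T := by
            ext w
            simp only [Finset.mem_filter, Finset.mem_univ, true_and, Finset.mem_insert,
              hTdef, kite_adj, ne_eq, Fin.ext_iff]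
            show (¬(a+1 = w.val) ∧ ((a+1 < a+2 ∧ w.val < a+2 ∧ (a+1+1 = w.val ∨ w.val+1 = a+1)) ∨
              (a+2 ≤ a+1+1 ∧ a+2 ≤ w.val+1))) ↔ (w.val = a ∨ a + 2 ≤ w.val)
            omega
          rw [hfil, Finset.sum_insert (by simp [hTdef] <;> omega), hTsum]
          show (if a < a + 2 then cheb t a else c) + μ * c
              = t * (if a+1 < a + 2 then cheb t (a+1) else c)
          rw [if_pos (by omega), if_pos (by omega)]
          linarith [hmuc, cheb_succ t a]
    · have hfil : Finset.univ.filter (fun w => (kiteGraph n (a+2)).Adj ⟨i, hi⟩ w)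
          = insert (⟨a+1, by omega⟩ : Fin n) (T.erase ⟨i, hi⟩) := by
        ext w
        simp only [Finset.mem_filter, Finset.mem_univ, true_and, Finset.mem_insert,
          Finset.mem_erase, hTdef, kite_adj, ne_eq, Fin.ext_iff]
        show (¬(i = w.val) ∧ ((i < a+2 ∧ w.val < a+2 ∧ (i+1 = w.val ∨ w.val+1 = i)) ∨
          (a+2 ≤ i+1 ∧ a+2 ≤ w.val+1))) ↔ (w.val = a+1 ∨ (¬(w.val = i) ∧ a + 2 ≤ w.val))
        omega
      have hmem : (⟨i, hi⟩ : Fin n) ∈ T := by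
        rw [hTdef]; simp; omega
      rw [hfil, Finset.sum_insert (by simp [hTdef] <;> omega),
        Finset.sum_erase_eq_sub hmem, hTsum]
      show (if a+1 < a + 2 then cheb t (a+1) else c) + (μ * c - (if i < a + 2 then cheb t i else c))
          = t * (if i < a + 2 then cheb t i else c)
      rw [if_pos (by omega), if_neg (by omega)]
      have hcc : c * (t + 1 - μ) = cheb t (a+1) := by
        rw [hcdef]; field_simp
      linear_combination -hcc
  haveI : Nonempty (Fin n) := ⟨⟨0, by omega⟩⟩
  have hbddA : BddAbove (Set.range y) := Set.Finite.bddAbove (Set.finite_range y)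
  have hbddB : BddBelow (Set.range y) := Set.Finite.bddBelow (Set.finite_range y)
  have hsup : cheb t (a+1) ≤ ⨆ v, y v := by
    have h := le_ciSup hbddA (⟨a+1, by omega⟩ : Fin n)
    calc cheb t (a+1) = y ⟨a+1, by omega⟩ := by
          show _ = if a+1 < a+2 then cheb t (a+1) else c
          rw [if_pos (by omega)]
    _ ≤ _ := h
  have hinf1 : (⨅ v, y v) ≤ 1 := by
    have h := ciInf_le hbddB (⟨0, by omega⟩ : Fin n)
    calc (⨅ v, y v) ≤ y ⟨0, by omega⟩ := h
    _ = 1 := by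
          show (if (0:ℕ) < a+2 then cheb t 0 else c) = 1
          rw [if_pos (by omega), cheb_zero]
  have hinfpos : 0 < ⨅ v, y v := by
    obtain ⟨w, hw⟩ := Finite.exists_min y
    exact lt_of_lt_of_le (hypos w) (le_ciInf hw)
  refine ⟨t, y, hμt, ⟨hypos, heig⟩, ?_⟩
  rw [pRatio, le_div_iff₀ hinfpos]
  calc cheb t (a+1) * (⨅ v, y v) ≤ cheb t (a+1) * 1 :=
        mul_le_mul_of_nonneg_left hinf1 (le_of_lt (cheb_pos ht2 (a+1)))
  _ = cheb t (a+1) := mul_one _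
  _ ≤ _ := hsup

/-! ### Generic helpers -/

lemma row_sum {n : ℕ} (G : SimpleGraph (Fin n)) (lam : ℝ) (x : Fin n → ℝ)
    (h : adjMat G *ᵥ x = lam • x) (u : Fin n) :
    ∑ w ∈ Finset.univ.filter (fun w => G.Adj u w), x w = lam * x u := by
  have h2 := congrFun h u
  rw [Matrix.mulVec, Pi.smul_apply, smul_eq_mul] at h2
  rw [← h2, dotProduct, Finset.sum_filter]
  apply Finset.sum_congr rfl
  intro w _
  simp only [adjMat, Matrix.of_apply]
  split <;> simp

lemma deg_eq {n : ℕ} (G : SimpleGraph (Fin n)) (u : Fin n) :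
    deg G u = (Finset.univ.filter (fun w => G.Adj u w)).card := by
  rw [deg, Set.ncard_eq_toFinset_card']
  congr 1
  ext w
  simp [SimpleGraph.neighborSet]
  exact Set.mem_toFinset

lemma adj_dist_le {V : Type*} {G : SimpleGraph V} {a b : V} (h : G.Adj a b) :
    G.dist a b ≤ 1 := by
  have := SimpleGraph.dist_le (SimpleGraph.Walk.cons h SimpleGraph.Walk.nil)
  simpa using this

set_option maxHeartbeats 1000000 in
/-- Extremal setup: `G` is a connected graph on `n ≥ 5000` vertices maximizing the
principal ratio among all connected graphs on `n` vertices; `x` is its principal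
eigenvector scaled so that the maximum entry is `1`; `v 0, …, v (k-1)` is a shortest path
from a minimum-entry vertex to a maximum-entry vertex, where `k - 1` is the shortest
distance between any minimum-entry vertex and any maximum-entry vertex. -/
theorem max_degree_eq
    {n k : ℕ} (hn : 5000 ≤ n) (hk : 2 ≤ k)
    (G : SimpleGraph (Fin n)) (hG : G.Connected)
    (lam : ℝ) (x : Fin n → ℝ)
    (hpe : IsPrincipalEigenpair G lam x)
    (hx1 : ∀ u, x u ≤ 1)
    (hext : ∀ (G' : SimpleGraph (Fin n)), G'.Connected →
      ∀ (lam' : ℝ) (x' : Fin n → ℝ), IsPrincipalEigenpair G' lam' x' →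
        pRatio x' ≤ pRatio x)
    (v : Fin k → Fin n) (hinj : Function.Injective v)
    (hpath : ∀ (i : ℕ) (hi : i + 1 < k), G.Adj (v ⟨i, by omega⟩) (v ⟨i + 1, hi⟩))
    (hmin : ∀ u, x (v ⟨0, by omega⟩) ≤ x u)
    (hvk : x (v ⟨k - 1, by omega⟩) = 1)
    (hdist : G.dist (v ⟨0, by omega⟩) (v ⟨k - 1, by omega⟩) = k - 1)
    (hshort : ∀ a b : Fin n, (∀ u, x a ≤ x u) → x b = 1 → k - 1 ≤ G.dist a b) :
    deg G (v ⟨k - 1, by omega⟩) = n - k + 1 ∧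
    (∀ u : Fin n, deg G u ≤ n - k + 1) ∧
    lam < (n : ℝ) - k + 1 := by
  have hn0 : 0 < n := by omega
  have hkn : k ≤ n := by
    have := Fintype.card_le_of_injective v hinj
    simpa using this
  obtain ⟨xpos, heig⟩ := hpe
  haveI : Nonempty (Fin n) := ⟨⟨0, hn0⟩⟩
  set vv : ℕ → Fin n := fun j => v ⟨min j (k-1), by omega⟩ with hvvdef
  have hvv : ∀ j (h : j < k), vv j = v ⟨j, h⟩ := by
    intro j h
    apply congrArg v
    apply Fin.ext
    show min j (k-1) = j
    omega
  have vv_inj : ∀ i j, i < k → j < k → vv i = vv j → i = j := by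
    intro i j hi hj he
    rw [hvv i hi, hvv j hj] at he
    have := hinj he
    have := congrArg Fin.val this
    simpa using this
  have hvk' : x (vv (k-1)) = 1 := by rw [hvv (k-1) (by omega)]; exact hvk
  have hrow := row_sum G lam x heig
  have hadjp : ∀ j, j + 1 < k → G.Adj (vv j) (vv (j+1)) := by
    intro j hj
    rw [hvv j (by omega), hvv (j+1) hj]
    exact hpath j hj
  -- distance along the path
  have hdpath : ∀ i d (h : i + d < k), G.dist (vv i) (vv (i+d)) ≤ d := by
    intro i d
    induction d with
    | zero => intro h; simp
    | succ e ih =>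
        intro h
        have h1 := ih (by omega)
        have h2 : G.Adj (vv (i+e)) (vv (i+e+1)) := hadjp _ (by omega)
        have h3 := adj_dist_le h2
        have h4 := hG.dist_triangle (u := vv i) (v := vv (i+e)) (w := vv (i+e+1))
        have : G.dist (vv i) (vv (i+e+1)) ≤ e + 1 := by omega
        exact this
  have hd0 : ∀ j (h : j < k), G.dist (vv 0) (vv j) ≤ j := by
    intro j h
    have := hdpath 0 j (by omega)
    simpa using this
  have hdk : ∀ j (h : j < k), G.dist (vv j) (vv (k-1)) ≤ k - 1 - j := by
    intro j h
    have := hdpath j (k-1-j) (by omega)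
    rwa [show j + (k-1-j) = k-1 by omega] at this
  have hdist' : G.dist (vv 0) (vv (k-1)) = k - 1 := by
    rw [hvv 0 (by omega), hvv (k-1) (by omega)]
    exact hdist
  -- window lemmas
  have M1 : ∀ i j (hi : i < k) (hj : j < k), G.Adj (vv i) (vv j) → i ≤ j → j ≤ i + 1 := by
    intro i j hi hj hadj hij
    have t1 := hG.dist_triangle (u := vv 0) (v := vv i) (w := vv (k-1))
    have t2 := hG.dist_triangle (u := vv i) (v := vv j) (w := vv (k-1))
    have t3 := adj_dist_le hadj
    have t4 := hd0 i hi
    have t5 := hdk j hj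
    omega
  have M2 : ∀ (w : Fin n) i j (hi : i < k) (hj : j < k),
      G.Adj (vv i) w → G.Adj (vv j) w → i ≤ j → j ≤ i + 2 := by
    intro w i j hi hj ha1 ha2 hij
    have t1 := hG.dist_triangle (u := vv 0) (v := vv i) (w := vv (k-1))
    have t2 := hG.dist_triangle (u := vv i) (v := w) (w := vv (k-1))
    have t3 := hG.dist_triangle (u := w) (v := vv j) (w := vv (k-1))
    have t4 := adj_dist_le ha1
    have t5 := adj_dist_le ha2.symm
    have t6 := hd0 i hi
    have t7 := hdk j hj
    omega
  -- path vertex set and off-path set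
  set Vs : Finset (Fin n) := Finset.univ.image v with hVsdef
  have hVcard : Vs.card = k := by
    rw [hVsdef, Finset.card_image_of_injective _ hinj, Finset.card_univ, Fintype.card_fin]
  set O : Finset (Fin n) := Finset.univ \ Vs with hOdef
  have hOcard : O.card = n - k := by
    rw [hOdef, Finset.card_sdiff_of_subset (Finset.subset_univ _), Finset.card_univ,
      Fintype.card_fin, hVcard]
  have hmemVs : ∀ j (h : j < k), vv j ∈ Vs := by
    intro j h
    rw [hVsdef, Finset.mem_image]
    exact ⟨⟨j, h⟩, Finset.mem_univ _, (hvv j h).symm⟩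
  have hnotO : ∀ j (h : j < k), vv j ∉ O := by
    intro j h hmem
    rw [hOdef, Finset.mem_sdiff] at hmem
    exact hmem.2 (hmemVs j h)
  have hVmem : ∀ w : Fin n, w ∉ O → ∃ j, ∃ (h : j < k), w = vv j := by
    intro w hw
    have : w ∈ Vs := by
      by_contra hc
      exact hw (by rw [hOdef, Finset.mem_sdiff]; exact ⟨Finset.mem_univ _, hc⟩)
    rw [hVsdef, Finset.mem_image] at this
    obtain ⟨j, _, hj⟩ := this
    exact ⟨j.val, j.isLt, by rw [hvv j.val j.isLt, Fin.eta]; exact hj.symm⟩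
  -- N(v_{k-1}) ⊆ {v_{k-2}} ∪ O
  have hNk : Finset.univ.filter (fun w => G.Adj (vv (k-1)) w) ⊆ insert (vv (k-2)) O := by
    intro w hw
    rw [Finset.mem_filter] at hw
    by_cases hwO : w ∈ O
    · exact Finset.mem_insert_of_mem hwO
    · obtain ⟨j, hjk, rfl⟩ := hVmem w hwO
      have hne : j ≠ k - 1 := by
        intro he
        rw [he] at hw
        exact (G.loopless.irrefl _ ) hw.2
      have hle := M1 j (k-1) hjk (by omega) hw.2.symm (by omega)
      have : j = k - 2 := by omega
      rw [this]
      exact Finset.mem_insert_self _ _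
  have hdegk_le : deg G (vv (k-1)) ≤ n - k + 1 := by
    rw [deg_eq]
    calc (Finset.univ.filter (fun w => G.Adj (vv (k-1)) w)).card
        ≤ (insert (vv (k-2)) O).card := Finset.card_le_card hNk
    _ ≤ O.card + 1 := Finset.card_insert_le _ _
    _ = n - k + 1 := by rw [hOcard]
  -- lam ≤ deg(v_{k-1})
  have hlam_deg : lam ≤ (deg G (vv (k-1)) : ℝ) := by
    have h1 := hrow (vv (k-1))
    rw [hvk', mul_one] at h1
    rw [← h1, deg_eq]
    calc ∑ w ∈ Finset.univ.filter (fun w => G.Adj (vv (k-1)) w), x w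
        ≤ ∑ _w ∈ Finset.univ.filter (fun w => G.Adj (vv (k-1)) w), (1:ℝ) :=
          Finset.sum_le_sum (fun w _ => hx1 w)
    _ = _ := by rw [Finset.sum_const, nsmul_eq_mul, mul_one]
  -- recurrences along the path
  have R1 : ∀ j, j + 1 < k → x (vv (j+1)) ≤ lam * x (vv j) := by
    intro j hj
    rw [← hrow (vv j)]
    apply Finset.single_le_sum (f := fun w => x w) (fun w _ => le_of_lt (xpos w))
    rw [Finset.mem_filter]
    exact ⟨Finset.mem_univ _, hadjp j hj⟩
  have lam_pos : 0 < lam := by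
    have h1 := R1 (k-2) (by omega)
    rw [show k-2+1 = k-1 by omega, hvk'] at h1
    nlinarith [xpos (vv (k-2))]
  have R2 : ∀ j, j + 2 < k → x (vv j) + x (vv (j+2)) ≤ lam * x (vv (j+1)) := by
    intro j hj
    rw [← hrow (vv (j+1))]
    have hne : vv j ≠ vv (j+2) := by
      intro he
      have := vv_inj j (j+2) (by omega) (by omega) he
      omega
    have hsub : ({vv j, vv (j+2)} : Finset (Fin n)) ⊆
        Finset.univ.filter (fun w => G.Adj (vv (j+1)) w) := by
      intro w hw
      rw [Finset.mem_insert, Finset.mem_singleton] at hw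
      rw [Finset.mem_filter]
      rcases hw with rfl | rfl
      · exact ⟨Finset.mem_univ _, (hadjp j (by omega)).symm⟩
      · exact ⟨Finset.mem_univ _, hadjp (j+1) (by omega)⟩
    calc x (vv j) + x (vv (j+2)) = ∑ w ∈ ({vv j, vv (j+2)} : Finset (Fin n)), x w :=
          (Finset.sum_pair hne).symm
    _ ≤ _ := Finset.sum_le_sum_of_subset_of_nonneg hsub (fun w _ _ => le_of_lt (xpos w))
  -- crude bound: 1 ≤ lam^(k-1) * x(v_1)
  have hcrude : ∀ j (h : j < k), x (vv j) ≤ lam ^ j * x (vv 0) := by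
    intro j
    induction j with
    | zero => intro h; simp
    | succ e ih =>
        intro h
        have h1 := R1 e (by omega)
        have h2 := ih (by omega)
        calc x (vv (e+1)) ≤ lam * x (vv e) := h1
        _ ≤ lam * (lam ^ e * x (vv 0)) := mul_le_mul_of_nonneg_left h2 (le_of_lt lam_pos)
        _ = lam ^ (e+1) * x (vv 0) := by ring
  have hcrude' : 1 ≤ lam ^ (k-1) * x (vv 0) := by
    have h := hcrude (k-1) (by omega)
    rwa [hvk'] at h
  -- sharp bound: if lam ≥ 2 then 1 ≤ cheb lam (k-1) * x(v_1)
  have hsharp : 2 ≤ lam → 1 ≤ cheb lam (k-1) * x (vv 0) := by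
    intro hl2
    have cross : ∀ j, j + 1 < k → x (vv (j+1)) * cheb lam j ≤ x (vv j) * cheb lam (j+1) := by
      intro j
      induction j with
      | zero =>
          intro h
          rw [cheb_zero, cheb_one, mul_one, mul_comm]
          exact R1 0 h
      | succ e ih =>
          intro h
          have hR2 := R2 e (by omega)
          have hI := ih (by omega)
          rw [cheb_succ]
          have hm := mul_le_mul_of_nonneg_right hR2 (le_of_lt (cheb_pos hl2 (e+1)))
          nlinarith [hm, hI]
    have D : ∀ j (h : j < k), x (vv j) ≤ cheb lam j * x (vv 0) := by
      intro j
      induction j with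
      | zero => intro h; simp [cheb_zero]
      | succ e ih =>
          intro h
          have hc := cross e h
          have hD := ih (by omega)
          have hcp := cheb_pos hl2 e
          have hstep : x (vv (e+1)) * cheb lam e ≤ (cheb lam (e+1) * x (vv 0)) * cheb lam e := by
            nlinarith [cheb_pos hl2 (e+1)]
          exact le_of_mul_le_mul_right hstep hcp
    have h := D (k-1) (by omega)
    rwa [hvk'] at h
  -- pRatio x = 1 / x(v_1)
  have hpratio_x : pRatio x = 1 / x (vv 0) := by
    have hsup : (⨆ u, x u) = 1 := by
      apply le_antisymm
      · exact ciSup_le hx1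
      · rw [← hvk']
        exact le_ciSup (Set.Finite.bddAbove (Set.finite_range x)) _
    have hinf : (⨅ u, x u) = x (vv 0) := by
      apply le_antisymm
      · exact ciInf_le (Set.Finite.bddBelow (Set.finite_range x)) _
      · apply le_ciInf
        intro u
        rw [hvv 0 (by omega)]
        exact hmin u
    rw [pRatio, hsup, hinf]
  -- kite-graph comparison via extremality
  have hcomp : ∀ a : ℕ, a + 4 ≤ n → ∃ t : ℝ,
      ((n - (a+2) : ℕ) : ℝ) < t ∧ 2 ≤ t ∧ cheb t (a+1) * x (vv 0) ≤ 1 := by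
    intro a ha
    obtain ⟨t, y, ht, hpair, hratio⟩ := kite_pair n a ha
    have hcon := kite_connected (n := n) (r := a+2) hn0
    have hle := hext _ hcon _ _ hpair
    have ht2 : (2:ℝ) ≤ t := by
      refine le_trans ?_ (le_of_lt ht)
      exact_mod_cast (by omega : 2 ≤ n - (a+2))
    refine ⟨t, ht, ht2, ?_⟩
    have hch : cheb t (a+1) ≤ 1 / x (vv 0) := by
      rw [← hpratio_x]
      exact le_trans hratio hle
    rw [le_div_iff₀ (xpos _)] at hch
    linarith
  -- rule out k ≥ n - 2
  have hk3 : k + 3 ≤ n := by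
    by_contra hcon
    push_neg at hcon
    have h3 : lam ≤ 3 := by
      have h4 : ((deg G (vv (k-1)) : ℕ) : ℝ) ≤ ((n - k + 1 : ℕ) : ℝ) := by
        exact_mod_cast hdegk_le
      have h5 : ((n - k + 1 : ℕ) : ℝ) ≤ 3 := by
        exact_mod_cast (by omega : n - k + 1 ≤ 3)
      linarith [hlam_deg]
    obtain ⟨t, ht, ht2, hcb⟩ := hcomp (n - 10) (by omega)
    have h8 : (8:ℝ) ≤ ((n - (n-10+2) : ℕ) : ℝ) := by
      exact_mod_cast (by omega : 8 ≤ n - (n-10+2))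
    have ht7 : (7:ℝ) ≤ t - 1 := by linarith
    have hx0pos := xpos (vv 0)
    have hcheb_ge : (7:ℝ)^(n-9) ≤ cheb t (n-10+1) := by
      calc (7:ℝ)^(n-9) = 7^(n-10+1) := by rw [show n-9 = n-10+1 by omega]
      _ ≤ (t-1)^(n-10+1) := pow_le_pow_left₀ (by norm_num) ht7 _
      _ ≤ cheb t (n-10+1) := cheb_ge_pow ht2 _
    have e2 : (7:ℝ)^(n-9) * x (vv 0) ≤ 1 := by
      have := mul_le_mul_of_nonneg_right hcheb_ge (le_of_lt hx0pos)
      linarith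
    have e1 : (1:ℝ) ≤ 3^(n-1) * x (vv 0) := by
      have hpow : lam^(k-1) ≤ 3^(n-1) := by
        calc lam^(k-1) ≤ 3^(k-1) := pow_le_pow_left₀ (le_of_lt lam_pos) h3 _
        _ ≤ 3^(n-1) := pow_le_pow_right₀ (by norm_num) (by omega)
      nlinarith [hcrude', mul_le_mul_of_nonneg_right hpow (le_of_lt hx0pos)]
    have e3 : (3:ℝ)^(n-1) < 7^(n-9) := by
      have g1 : (3:ℝ)^(n-1) = 3^8 * 3^(n-9) := by
        rw [← pow_add]
        congr 1
        omega
      have g2 : (2:ℝ)^13 * 3^(n-9) ≤ 2^(n-9) * 3^(n-9) :=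
        mul_le_mul_of_nonneg_right (pow_le_pow_right₀ (by norm_num) (by omega)) (by positivity)
      have g3 : (2:ℝ)^(n-9) * 3^(n-9) = 6^(n-9) := by
        rw [← mul_pow]; norm_num
      have g4 : (6:ℝ)^(n-9) ≤ 7^(n-9) := pow_le_pow_left₀ (by norm_num) (by norm_num) _
      have g5 : (3:ℝ)^8 < 2^13 := by norm_num
      have g6 : (0:ℝ) < 3^(n-9) := by positivity
      nlinarith [g6]
    have e4 := mul_lt_mul_of_pos_right e3 hx0pos
    linarith
  -- main comparison with r = k : lam > n - k
  obtain ⟨t, htgt, ht2, hcbk⟩ := hcomp (k-2) (by omega)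
  rw [show k-2+2 = k by omega] at htgt
  rw [show k-2+1 = k-1 by omega] at hcbk
  have hmge : (3:ℝ) ≤ ((n-k:ℕ):ℝ) := by exact_mod_cast (by omega : 3 ≤ n - k)
  have hx0pos := xpos (vv 0)
  have hlam2 : (2:ℝ) ≤ lam := by
    have c4 : cheb t (k-1) ≤ lam^(k-1) := by
      nlinarith [hcbk, hcrude', hx0pos]
    have c2 : (2:ℝ)^(k-1) ≤ (t-1)^(k-1) := pow_le_pow_left₀ (by norm_num) (by linarith) _
    have c3 := cheb_ge_pow ht2 (k-1)
    have c1 : (2:ℝ)^(k-1) ≤ lam^(k-1) := by linarith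
    exact le_of_pow_le_pow_left₀ (by omega : k-1 ≠ 0) (le_of_lt lam_pos) c1
  have hlamgt : ((n-k:ℕ):ℝ) < lam := by
    by_contra hle
    push_neg at hle
    have hlt : lam < t := lt_of_le_of_lt hle htgt
    have hcc := cheb_lt_cheb hlam2 hlt (k-2)
    rw [show k-2+1 = k-1 by omega] at hcc
    have hs := hsharp hlam2
    linarith [mul_lt_mul_of_pos_right hcc hx0pos, hcbk, hs]
  have hdegk : deg G (vv (k-1)) = n - k + 1 := by
    apply le_antisymm hdegk_le
    have h2 : ((n-k:ℕ):ℝ) < ((deg G (vv (k-1)) : ℕ) : ℝ) := lt_of_lt_of_le hlamgt hlam_deg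
    have h3 : n - k < deg G (vv (k-1)) := by exact_mod_cast h2
    omega
  -- neighbourhood of v_{k-1} is exactly {v_{k-2}} ∪ O
  have hNeq : Finset.univ.filter (fun w => G.Adj (vv (k-1)) w) = insert (vv (k-2)) O := by
    apply Finset.eq_of_subset_of_card_le hNk
    rw [← deg_eq, hdegk]
    calc (insert (vv (k-2)) O).card ≤ O.card + 1 := Finset.card_insert_le _ _
    _ = n - k + 1 := by rw [hOcard]
  have hadjO : ∀ w ∈ O, G.Adj (vv (k-1)) w := by
    intro w hw
    have hmem : w ∈ Finset.univ.filter (fun w => G.Adj (vv (k-1)) w) := by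
      rw [hNeq]; exact Finset.mem_insert_of_mem hw
    exact (Finset.mem_filter.1 hmem).2
  have hrowk : x (vv (k-2)) + ∑ w ∈ O, x w = lam := by
    have h0 := hrow (vv (k-1))
    rw [hNeq, Finset.sum_insert (hnotO (k-2) (by omega)), hvk', mul_one] at h0
    exact h0
  have hxk2 : x (vv (k-2)) < 1 := by
    rcases lt_or_eq_of_le (hx1 (vv (k-2))) with h | h
    · exact h
    · exfalso
      have hs := hshort (v ⟨0, by omega⟩) (vv (k-2)) hmin h
      have hd := hd0 (k-2) (by omega)
      rw [← hvv 0 (by omega)] at hs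
      omega
  have hsum_O : ∑ w ∈ O, x w ≤ ((n-k:ℕ):ℝ) := by
    calc ∑ w ∈ O, x w ≤ ∑ _w ∈ O, (1:ℝ) := Finset.sum_le_sum (fun w _ => hx1 w)
    _ = (O.card : ℝ) := by rw [Finset.sum_const, nsmul_eq_mul, mul_one]
    _ = _ := by rw [hOcard]
  have hcast : ((n-k:ℕ):ℝ) = (n:ℝ) - k := Nat.cast_sub hkn
  have hconj3 : lam < (n:ℝ) - (k:ℝ) + 1 := by
    rw [← hcast]
    linarith [hrowk, hxk2, hsum_O]
  -- conjunct 2: every vertex has degree at most n-k+1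
  have hconj2 : ∀ u : Fin n, deg G u ≤ n - k + 1 := by
    intro u
    by_contra hcu
    push_neg at hcu
    have hdeg_le : deg G u ≤ n - 1 := by
      rw [deg_eq]
      have hsub : Finset.univ.filter (fun w => G.Adj u w) ⊆ Finset.univ.erase u := by
        intro w hw
        rw [Finset.mem_filter] at hw
        rw [Finset.mem_erase]
        exact ⟨fun he => (G.loopless.irrefl u) (he ▸ hw.2), Finset.mem_univ _⟩
      calc _ ≤ (Finset.univ.erase u).card := Finset.card_le_card hsub
      _ = n - 1 := by
          rw [Finset.card_erase_of_mem (Finset.mem_univ _), Finset.card_univ, Fintype.card_fin]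
    have hk3' : 3 ≤ k := by omega
    by_cases huO : u ∈ O
    · -- off-path vertex of degree ≥ n-k+2
      have hadjuk : G.Adj (vv (k-1)) u := hadjO u huO
      set S : Finset (Fin n) :=
        insert (vv (k-3)) (insert (vv (k-2)) (insert (vv (k-1)) (O.erase u))) with hSdef
      have hsub : Finset.univ.filter (fun w => G.Adj u w) ⊆ S := by
        intro w hw
        rw [Finset.mem_filter] at hw
        by_cases hwO : w ∈ O
        · have hne : w ≠ u := fun he => (G.loopless.irrefl u) (he ▸ hw.2)
          rw [hSdef]
          exact Finset.mem_insert_of_mem (Finset.mem_insert_of_mem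
            (Finset.mem_insert_of_mem (Finset.mem_erase.2 ⟨hne, hwO⟩)))
        · obtain ⟨j, hjk, rfl⟩ := hVmem w hwO
          have hwin := M2 u j (k-1) hjk (by omega) hw.2.symm hadjuk (by omega)
          rw [hSdef]
          rcases (by omega : j = k-3 ∨ j = k-2 ∨ j = k-1) with rfl | rfl | rfl
          · exact Finset.mem_insert_self _ _
          · exact Finset.mem_insert_of_mem (Finset.mem_insert_self _ _)
          · exact Finset.mem_insert_of_mem
              (Finset.mem_insert_of_mem (Finset.mem_insert_self _ _))
      have hcerase : (O.erase u).card = n - k - 1 := by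
        rw [Finset.card_erase_of_mem huO, hOcard]
      have hScard : S.card ≤ n - k + 2 := by
        rw [hSdef]
        have c1 := Finset.card_insert_le (vv (k-3))
          (insert (vv (k-2)) (insert (vv (k-1)) (O.erase u)))
        have c2 := Finset.card_insert_le (vv (k-2)) (insert (vv (k-1)) (O.erase u))
        have c3 := Finset.card_insert_le (vv (k-1)) (O.erase u)
        omega
      have hcardfil : (Finset.univ.filter (fun w => G.Adj u w)).card = deg G u :=
        (deg_eq G u).symm
      have hNequ : Finset.univ.filter (fun w => G.Adj u w) = S := by
        apply Finset.eq_of_subset_of_card_le hsub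
        omega
      have h11 : vv (k-1) ∉ O.erase u := fun hm =>
        hnotO (k-1) (by omega) (Finset.mem_of_mem_erase hm)
      have h21 : vv (k-2) ∉ insert (vv (k-1)) (O.erase u) := by
        intro hm
        rcases Finset.mem_insert.1 hm with he | hm'
        · have := vv_inj (k-2) (k-1) (by omega) (by omega) he; omega
        · exact hnotO (k-2) (by omega) (Finset.mem_of_mem_erase hm')
      have h31 : vv (k-3) ∉ insert (vv (k-2)) (insert (vv (k-1)) (O.erase u)) := by
        intro hm
        rcases Finset.mem_insert.1 hm with he | hm'
        · have := vv_inj (k-3) (k-2) (by omega) (by omega) he; omega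
        · rcases Finset.mem_insert.1 hm' with he | hm''
          · have := vv_inj (k-3) (k-1) (by omega) (by omega) he; omega
          · exact hnotO (k-3) (by omega) (Finset.mem_of_mem_erase hm'')
      have hrowu := hrow u
      rw [hNequ, hSdef, Finset.sum_insert h31, Finset.sum_insert h21, Finset.sum_insert h11,
        Finset.sum_erase_eq_sub huO, hvk'] at hrowu
      linarith [mul_nonneg (le_of_lt lam_pos) (sub_nonneg.2 (hx1 u)),
        xpos (vv (k-3)), hrowk, hrowu, hx1 u]
    · -- on-path vertex of degree ≥ n-k+2
      obtain ⟨i, hik, rfl⟩ := hVmem u huO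
      have hine : i ≠ k - 1 := by
        intro he
        rw [he] at hcu
        omega
      set S : Finset (Fin n) := insert (vv (i-1)) (insert (vv (i+1)) O) with hSdef
      have hsub : Finset.univ.filter (fun w => G.Adj (vv i) w) ⊆ S := by
        intro w hw
        rw [Finset.mem_filter] at hw
        by_cases hwO : w ∈ O
        · exact hSdef ▸ Finset.mem_insert_of_mem (Finset.mem_insert_of_mem hwO)
        · obtain ⟨j, hjk, rfl⟩ := hVmem w hwO
          have hneij : i ≠ j := fun he => (G.loopless.irrefl _) (he ▸ hw.2)
          rw [hSdef]
          rcases le_or_gt i j with hij | hij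
          · have hw1 := M1 i j hik hjk hw.2 hij
            have he : j = i + 1 := by omega
            rw [he]
            exact Finset.mem_insert_of_mem (Finset.mem_insert_self _ _)
          · have hw1 := M1 j i hjk hik hw.2.symm (by omega)
            have he : j = i - 1 := by omega
            rw [he]
            exact Finset.mem_insert_self _ _
      have hScard : S.card ≤ n - k + 2 := by
        rw [hSdef]
        have c1 := Finset.card_insert_le (vv (i-1)) (insert (vv (i+1)) O)
        have c2 := Finset.card_insert_le (vv (i+1)) O
        omega
      have hcardfil : (Finset.univ.filter (fun w => G.Adj (vv i) w)).card = deg G (vv i) :=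
        (deg_eq G (vv i)).symm
      have hNequ : Finset.univ.filter (fun w => G.Adj (vv i) w) = S := by
        apply Finset.eq_of_subset_of_card_le hsub
        omega
      have hi0 : i ≠ 0 := by
        intro he
        subst he
        have hm : vv 0 ∈ S := hSdef ▸ Finset.mem_insert_self _ _
        rw [← hNequ, Finset.mem_filter] at hm
        exact (G.loopless.irrefl _) hm.2
      have hOsub : ∀ w ∈ O, G.Adj (vv i) w := by
        intro w hw
        have hm : w ∈ S := hSdef ▸ Finset.mem_insert_of_mem (Finset.mem_insert_of_mem hw)
        rw [← hNequ, Finset.mem_filter] at hm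
        exact hm.2
      obtain ⟨w0, hw0⟩ := Finset.card_pos.mp (show 0 < O.card by rw [hOcard]; omega)
      have hwin := M2 w0 i (k-1) hik (by omega) (hOsub w0 hw0) (hadjO w0 hw0) (by omega)
      have hne1 : vv (i-1) ∉ insert (vv (i+1)) O := by
        intro hm
        rcases Finset.mem_insert.1 hm with he | hm'
        · have := vv_inj (i-1) (i+1) (by omega) (by omega) he; omega
        · exact hnotO (i-1) (by omega) hm'
      have hne2 : vv (i+1) ∉ O := hnotO _ (by omega)
      have hrowi := hrow (vv i)
      rw [hNequ, hSdef, Finset.sum_insert hne1, Finset.sum_insert hne2] at hrowi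
      rcases (by omega : i = k-2 ∨ i = k-3) with rfl | rfl
      · rw [show k-2+1 = k-1 by omega, show k-2-1 = k-3 by omega, hvk'] at hrowi
        linarith [mul_nonneg (le_of_lt lam_pos) (sub_nonneg.2 (hx1 (vv (k-2)))),
          xpos (vv (k-3)), hrowk, hrowi, hx1 (vv (k-2))]
      · rw [show k-3+1 = k-2 by omega, show k-3-1 = k-4 by omega] at hrowi
        linarith [mul_nonneg (le_of_lt lam_pos) (sub_nonneg.2 (hx1 (vv (k-3)))),
          xpos (vv (k-4)), hrowk, hrowi, hx1 (vv (k-3))]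
  refine ⟨?_, hconj2, hconj3⟩
  rw [show (v ⟨k-1, by omega⟩ : Fin n) = vv (k-1) from (hvv (k-1) (by omega)).symm]
  exact hdegk
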